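/- Suppose (x_n)_{n∈ℤ} satisfies x_n = n + ε_n with |ε_n| ≤ C(1+|n|)^θ for some 0 ≤ θ < 1. Then the j-th iterated midpoint sequence satisfies x^j_{n+1} - x^j_n = 1 + O((n^θ + j^{θ/2}) j^{-1/2}) as j → ∞ (uniformly for fixed n, with implied constant depending only on C and θ). -/

import Mathlib

open Finset Real

/-- The iterated midpoint sequences: `x^0_n = x_n` and
`x^{j+1}_n = ½(x^j_n + x^j_{n+(-1)^j})`. -/
noncomputable def midIter (x : ℤ → ℝ) : ℕ → ℤ → ℝ
  | 0, n => x n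
  | (j + 1), n => (midIter x j n + midIter x j (n + (-1) ^ j)) / 2

lemma midIter_eq_sum (x : ℤ → ℝ) : ∀ (j : ℕ) (n : ℤ),
    midIter x j n
      = (∑ k ∈ range (j + 1), (j.choose k : ℝ) * x (n + (((j + 1) / 2 : ℕ) : ℤ) - k)) / 2 ^ j := by
  intro j
  induction j with
  | zero => intro n; simp [midIter]
  | succ j ih =>
    intro n
    have key : ∀ m : ℤ,
        ∑ k ∈ range (j + 2), ((j + 1).choose k : ℝ) * x (m - k)
          = (∑ k ∈ range (j + 1), (j.choose k : ℝ) * x (m - k))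
            + ∑ k ∈ range (j + 1), (j.choose k : ℝ) * x (m - 1 - k) := by
      intro m
      rw [Finset.sum_range_succ' (fun k => ((j + 1).choose k : ℝ) * x (m - k)) (j + 1)]
      have h1 : ∀ i ∈ range (j + 1),
          (((j + 1).choose (i + 1) : ℕ) : ℝ) * x (m - (i + 1 : ℕ))
            = (j.choose (i + 1) : ℝ) * x (m - (i + 1 : ℕ))
              + (j.choose i : ℝ) * x (m - 1 - i) := by
        intro i _
        have : (j + 1).choose (i + 1) = j.choose i + j.choose (i + 1) := Nat.choose_succ_succ j i
        rw [this]
        push_cast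
        have : m - ((i : ℤ) + 1) = m - 1 - i := by ring
        rw [this]; ring
      rw [Finset.sum_congr rfl h1, Finset.sum_add_distrib]
      have h2 : (∑ i ∈ range (j + 1), (j.choose (i + 1) : ℝ) * x (m - (i + 1 : ℕ)))
            + (((j + 1).choose 0 : ℕ) : ℝ) * x (m - (0 : ℕ))
          = ∑ k ∈ range (j + 2), (j.choose k : ℝ) * x (m - k) := by
        rw [Finset.sum_range_succ' (fun k => (j.choose k : ℝ) * x (m - k)) (j + 1)]
        norm_num
      have h3 : ∑ k ∈ range (j + 2), (j.choose k : ℝ) * x (m - k)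
          = ∑ k ∈ range (j + 1), (j.choose k : ℝ) * x (m - k) := by
        rw [Finset.sum_range_succ]
        simp [Nat.choose_succ_self]
      linarith [h2, h3]
    show (midIter x j n + midIter x j (n + (-1) ^ j)) / 2 = _
    rcases Nat.even_or_odd j with he | ho
    · have hpow : ((-1 : ℤ) ^ j) = 1 := he.neg_one_pow
      obtain ⟨a, rfl⟩ := he
      have hs : (((a + a) + 1 + 1) / 2 : ℕ) = ((a + a) + 1) / 2 + 1 := by omega
      rw [hpow, ih n, ih (n + 1), key (n + ((((a + a) + 1 + 1) / 2 : ℕ) : ℤ))]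
      have hs' : ((((a + a) + 1 + 1) / 2 : ℕ) : ℤ) = (((a + a) + 1) / 2 : ℕ) + 1 := by
        rw [hs]; push_cast; ring
      have e1 : ∀ k : ℕ, (n + ((((a + a) + 1 + 1) / 2 : ℕ) : ℤ) - k)
          = (n + 1) + ((((a + a) + 1) / 2 : ℕ) : ℤ) - k := by intro k; rw [hs']; ring
      have e2 : ∀ k : ℕ, (n + ((((a + a) + 1 + 1) / 2 : ℕ) : ℤ) - 1 - k)
          = n + ((((a + a) + 1) / 2 : ℕ) : ℤ) - k := by intro k; rw [hs']; ring
      simp only [e1, e2]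
      rw [pow_succ]
      field_simp
      ring
    · have hpow : ((-1 : ℤ) ^ j) = -1 := ho.neg_one_pow
      obtain ⟨a, rfl⟩ := ho
      have hs : ((2 * a + 1 + 1 + 1) / 2 : ℕ) = (2 * a + 1 + 1) / 2 := by omega
      rw [hpow, ih n, ih (n + -1), key (n + (((2 * a + 1 + 1 + 1) / 2 : ℕ) : ℤ))]
      have hs' : (((2 * a + 1 + 1 + 1) / 2 : ℕ) : ℤ) = ((2 * a + 1 + 1) / 2 : ℕ) := by
        rw [hs]
      have e1 : ∀ k : ℕ, (n + (((2 * a + 1 + 1 + 1) / 2 : ℕ) : ℤ) - k)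
          = n + (((2 * a + 1 + 1) / 2 : ℕ) : ℤ) - k := by intro k; rw [hs']
      have e2 : ∀ k : ℕ, (n + (((2 * a + 1 + 1 + 1) / 2 : ℕ) : ℤ) - 1 - k)
          = (n + -1) + (((2 * a + 1 + 1) / 2 : ℕ) : ℤ) - k := by intro k; rw [hs']; ring
      simp only [e1, e2]
      rw [pow_succ, ← add_div, div_div]
      congr 1

lemma abel_up (Q V : ℕ → ℝ) (hQ : ∀ k, 0 ≤ Q k) (t : ℕ) :
    ∑ k ∈ range t, (Q (k+1) - Q k) * V (k+1)
      ≤ Q t * V t - Q 0 * V 0 + ∑ k ∈ range t, Q k * |V (k+1) - V k| := by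
  induction t with
  | zero => simp
  | succ t ih =>
    rw [Finset.sum_range_succ, Finset.sum_range_succ
      (fun k => Q k * |V (k+1) - V k|)]
    have h2 : V t - V (t+1) ≤ |V (t+1) - V t| := by
      rw [abs_sub_comm]; exact le_abs_self _
    have h1 : Q t * V t - Q t * V (t+1) ≤ Q t * |V (t+1) - V t| := by
      rw [← mul_sub]; exact mul_le_mul_of_nonneg_left h2 (hQ t)
    nlinarith [ih]

lemma abel_down (Q V : ℕ → ℝ) (hQ : ∀ k, 0 ≤ Q k) (t : ℕ) :
    ∑ k ∈ range t, (Q k - Q (k+1)) * V k + Q t * V t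
      ≤ Q 0 * V 0 + ∑ k ∈ range t, Q (k+1) * |V (k+1) - V k| := by
  induction t with
  | zero => simp
  | succ t ih =>
    rw [Finset.sum_range_succ, Finset.sum_range_succ
      (fun k => Q (k+1) * |V (k+1) - V k|)]
    have h2 : V (t+1) - V t ≤ |V (t+1) - V t| := le_abs_self _
    have h1 : Q (t+1) * V (t+1) - Q (t+1) * V t ≤ Q (t+1) * |V (t+1) - V t| := by
      rw [← mul_sub]; exact mul_le_mul_of_nonneg_left h2 (hQ (t+1))
    nlinarith [ih]

lemma sum_mirror (f : ℕ → ℝ) (T : ℕ) :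
    ∑ i ∈ range (2 * T + 1), f (((i : ℤ) - T).natAbs)
      = f 0 + 2 * ∑ d ∈ range T, f (d + 1) := by
  induction T with
  | zero => simp
  | succ T ih =>
    have h : 2 * (T + 1) + 1 = (2 * T + 1) + 1 + 1 := by ring
    rw [h, Finset.sum_range_succ, Finset.sum_range_succ']
    have e1 : ∀ i, (((i + 1 : ℕ) : ℤ) - ((T+1 : ℕ) : ℤ)).natAbs
        = ((i : ℤ) - (T : ℕ)).natAbs := by intro i; push_cast; congr 1; ring
    have e2 : (((2 * T + 1 + 1 : ℕ) : ℤ) - ((T + 1 : ℕ) : ℤ)).natAbs = T + 1 := by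
      push_cast; omega
    have e3 : (((0 : ℕ) : ℤ) - ((T + 1 : ℕ) : ℤ)).natAbs = T + 1 := by
      push_cast; omega
    calc (∑ i ∈ range (2 * T + 1), f ((((i : ℕ) + 1 : ℤ)) - ((T : ℕ) + 1 : ℤ)).natAbs)
          + f ((((0 : ℕ) : ℤ)) - ((T : ℕ) + 1 : ℤ)).natAbs
          + f ((((2 * T + 1 + 1 : ℕ) : ℤ)) - ((T : ℕ) + 1 : ℤ)).natAbs
        = (∑ i ∈ range (2 * T + 1), f (((i : ℤ) - (T : ℕ)).natAbs)) + f (T + 1) + f (T + 1) := by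
          rw [show ((((2 * T + 1 + 1 : ℕ) : ℤ)) - ((T : ℕ) + 1 : ℤ)).natAbs = T + 1 by
                push_cast; omega,
              show ((((0 : ℕ) : ℤ)) - ((T : ℕ) + 1 : ℤ)).natAbs = T + 1 by push_cast; omega]
          congr 2
          exact Finset.sum_congr rfl fun i _ => by congr 1; push_cast; omega
      _ = f 0 + 2 * ∑ d ∈ range (T + 1), f (d + 1) := by
          rw [ih, Finset.sum_range_succ]; ring

section Bern
variable {θ : ℝ}

lemma rpow_diff_le (hθ0 : 0 ≤ θ) (hθ1 : θ ≤ 1) {b : ℝ} (hb : 0 ≤ b) :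
    (2 + b) ^ θ - (1 + b) ^ θ ≤ θ * (1 + b) ^ (θ - 1) := by
  have h1b : (0:ℝ) < 1 + b := by linarith
  have hx : (0:ℝ) ≤ 1 / (1 + b) := by positivity
  have key : (2 + b) ^ θ ≤ (1 + b) ^ θ * (1 + θ * (1 / (1 + b))) := by
    have e : (2 + b) = (1 + b) * (1 + 1 / (1 + b)) := by field_simp; ring
    rw [e, Real.mul_rpow h1b.le (by linarith)]
    exact mul_le_mul_of_nonneg_left
      (rpow_one_add_le_one_add_mul_self (by linarith) hθ0 hθ1)
      (Real.rpow_nonneg h1b.le θ)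
  have e2 : (1 + b) ^ θ * (1 + θ * (1 / (1 + b)))
      = (1 + b) ^ θ + θ * (1 + b) ^ (θ - 1) := by
    rw [Real.rpow_sub h1b, Real.rpow_one]
    field_simp
  linarith [key, e2.le]

lemma theta_step (hθ0 : 0 ≤ θ) (hθ1 : θ ≤ 1) (e : ℕ) :
    θ * ((e : ℝ) + 1) ^ (θ - 1) ≤ ((e : ℝ) + 1) ^ θ - (e : ℝ) ^ θ := by
  have ht : (0:ℝ) < (e : ℝ) + 1 := by positivity
  have hx : (-1 : ℝ) ≤ -1 / ((e : ℝ) + 1) := by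
    rw [neg_div]
    have : 1 / ((e:ℝ)+1) ≤ 1 := by
      rw [div_le_one ht]; linarith
    linarith
  have key : (e : ℝ) ^ θ ≤ ((e:ℝ)+1) ^ θ * (1 + θ * (-1 / ((e:ℝ)+1))) := by
    have e1 : (e : ℝ) = ((e:ℝ)+1) * (1 + -1 / ((e:ℝ)+1)) := by field_simp; ring
    calc (e : ℝ) ^ θ = (((e:ℝ)+1) * (1 + -1 / ((e:ℝ)+1))) ^ θ := by rw [← e1]
      _ = ((e:ℝ)+1) ^ θ * (1 + -1 / ((e:ℝ)+1)) ^ θ := by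
          rw [Real.mul_rpow ht.le (by linarith)]
      _ ≤ ((e:ℝ)+1) ^ θ * (1 + θ * (-1 / ((e:ℝ)+1))) :=
          mul_le_mul_of_nonneg_left
            (rpow_one_add_le_one_add_mul_self hx hθ0 hθ1)
            (Real.rpow_nonneg ht.le θ)
  have e2 : ((e:ℝ)+1) ^ θ * (1 + θ * (-1 / ((e:ℝ)+1)))
      = ((e:ℝ)+1) ^ θ - θ * ((e:ℝ)+1) ^ (θ - 1) := by
    rw [Real.rpow_sub ht, Real.rpow_one]
    field_simp
    ring
  linarith [key, e2.le]

lemma sum_theta (hθ0 : 0 ≤ θ) (hθ1 : θ ≤ 1) (M : ℕ) :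
    ∑ e ∈ range M, θ * ((e : ℝ) + 1) ^ (θ - 1) ≤ (M : ℝ) ^ θ := by
  induction M with
  | zero => simpa using Real.rpow_nonneg (le_refl (0:ℝ)) θ
  | succ M ih =>
    rw [Finset.sum_range_succ]
    have := theta_step hθ0 hθ1 M
    push_cast
    push_cast at ih this
    linarith

lemma wdiff (hθ0 : 0 ≤ θ) (hθ1 : θ ≤ 1) (v : ℤ) :
    |(1 + |((v : ℤ) : ℝ)| ) ^ θ - (1 + |((v - 1 : ℤ) : ℝ)|) ^ θ|
      ≤ θ * (1 ⊔ (|((v : ℤ) : ℝ)| - 1)) ^ (θ - 1) := by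
  have hmax : (0:ℝ) < 1 ⊔ (|((v : ℤ) : ℝ)| - 1) := lt_of_lt_of_le zero_lt_one (le_max_left _ _)
  rcases le_or_gt 1 v with hv | hv
  · -- |v| = v, |v-1| = v - 1
    have h1 : |((v : ℤ) : ℝ)| = (v : ℝ) := abs_of_nonneg (by exact_mod_cast hv.trans' zero_le_one)
    have h2 : |((v - 1 : ℤ) : ℝ)| = (v : ℝ) - 1 := by
      push_cast
      exact abs_of_nonneg (by exact_mod_cast sub_nonneg.mpr (by exact_mod_cast hv))
    set b : ℝ := (v : ℝ) - 1 with hb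
    have hb0 : 0 ≤ b := by
      have : (1:ℝ) ≤ (v:ℝ) := by exact_mod_cast hv
      simp [hb]; linarith
    have hd : (1 + |((v : ℤ) : ℝ)|) ^ θ - (1 + |((v - 1 : ℤ) : ℝ)|) ^ θ
        = (2 + b) ^ θ - (1 + b) ^ θ := by rw [h1, h2, hb]; ring_nf
    rw [hd, abs_of_nonneg (by
      have : (1:ℝ) + b ≤ 2 + b := by linarith
      linarith [Real.rpow_le_rpow (by linarith) this hθ0])]
    refine le_trans (rpow_diff_le hθ0 hθ1 hb0) ?_
    have hle : 1 ⊔ (|((v : ℤ) : ℝ)| - 1) ≤ 1 + b := by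
      apply max_le (by linarith) (by rw [h1]; linarith)
    exact mul_le_mul_of_nonneg_left
      (Real.rpow_le_rpow_of_nonpos hmax hle (by linarith)) hθ0
  · -- v ≤ 0 : |v| = -v, |v-1| = 1 - v
    have hv0 : v ≤ 0 := by omega
    have h1 : |((v : ℤ) : ℝ)| = -(v : ℝ) := abs_of_nonpos (by exact_mod_cast hv0)
    have h2 : |((v - 1 : ℤ) : ℝ)| = 1 - (v : ℝ) := by
      push_cast
      rw [abs_of_nonpos (by exact_mod_cast sub_nonpos.mpr (le_trans (by exact_mod_cast hv0) zero_le_one))]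
      ring
    set b : ℝ := -(v : ℝ) with hb
    have hb0 : 0 ≤ b := by
      have : (v:ℝ) ≤ 0 := by exact_mod_cast hv0
      simp [hb]; linarith
    have hd : (1 + |((v : ℤ) : ℝ)|) ^ θ - (1 + |((v - 1 : ℤ) : ℝ)|) ^ θ
        = (1 + b) ^ θ - (2 + b) ^ θ := by rw [h1, h2, hb]; ring_nf
    rw [hd, abs_sub_comm, abs_of_nonneg (by
      have : (1:ℝ) + b ≤ 2 + b := by linarith
      linarith [Real.rpow_le_rpow (by linarith) this hθ0])]
    refine le_trans (rpow_diff_le hθ0 hθ1 hb0) ?_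
    have hle : 1 ⊔ (|((v : ℤ) : ℝ)| - 1) ≤ 1 + b := by
      apply max_le (by linarith) (by rw [h1]; linarith)
    exact mul_le_mul_of_nonneg_left
      (Real.rpow_le_rpow_of_nonpos hmax hle (by linarith)) hθ0

end Bern

lemma central_sq (m : ℕ) : (2*m+1) * (Nat.centralBinom m)^2 ≤ 16 ^ m := by
  induction m with
  | zero => simp [Nat.centralBinom]
  | succ m ih =>
    have h := Nat.succ_mul_centralBinom_succ m
    have hpos : 0 < (m+1)^2 := by positivity
    have key : (m+1)^2 * ((2*(m+1)+1) * (Nat.centralBinom (m+1))^2)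
        ≤ (m+1)^2 * 16 ^ (m+1) := by
      calc (m+1)^2 * ((2*(m+1)+1) * (Nat.centralBinom (m+1))^2)
          = (2*m+3) * ((m+1) * Nat.centralBinom (m+1))^2 := by ring
        _ = (2*m+3) * (2*(2*m+1) * Nat.centralBinom m)^2 := by rw [h]
        _ = (4*(2*m+3)*(2*m+1)) * ((2*m+1) * (Nat.centralBinom m)^2) := by ring
        _ ≤ (4*(2*m+3)*(2*m+1)) * 16 ^ m := Nat.mul_le_mul_left _ ih
        _ ≤ (16*(m+1)^2) * 16 ^ m := Nat.mul_le_mul_right _ (by nlinarith)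
        _ = (m+1)^2 * 16 ^ (m+1) := by ring
    exact Nat.le_of_mul_le_mul_left key hpos

lemma centralBinom_real (m : ℕ) :
    (Nat.centralBinom m : ℝ) * Real.sqrt (2*m+1) ≤ 4 ^ m := by
  have h : ((2*m+1 : ℕ) : ℝ) * ((Nat.centralBinom m : ℝ))^2 ≤ (16 : ℝ) ^ m := by
    have := central_sq m
    calc ((2*m+1 : ℕ) : ℝ) * ((Nat.centralBinom m : ℝ))^2
        = (((2*m+1) * (Nat.centralBinom m)^2 : ℕ) : ℝ) := by push_cast; ring
      _ ≤ ((16 ^ m : ℕ) : ℝ) := by exact_mod_cast this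
      _ = (16 : ℝ) ^ m := by push_cast; ring
  have hB : (0:ℝ) ≤ (Nat.centralBinom m : ℝ) := by positivity
  have h2 : ((Nat.centralBinom m : ℝ) * Real.sqrt (2*m+1))^2 ≤ ((4:ℝ)^m)^2 := by
    have hs : (Real.sqrt (2*m+1))^2 = (2*m+1 : ℝ) := Real.sq_sqrt (by positivity)
    calc ((Nat.centralBinom m : ℝ) * Real.sqrt (2*m+1))^2
        = (2*m+1 : ℝ) * ((Nat.centralBinom m : ℝ))^2 := by rw [mul_pow, hs]; ring
      _ = ((2*m+1 : ℕ) : ℝ) * ((Nat.centralBinom m : ℝ))^2 := by push_cast; ring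
      _ ≤ (16 : ℝ) ^ m := h
      _ = ((4:ℝ)^m)^2 := by
          rw [← pow_mul, show m*2 = 2*m from mul_comm m 2, pow_mul]
          norm_num
  have h3 := Real.sqrt_le_sqrt h2
  rwa [Real.sqrt_sq (by positivity), Real.sqrt_sq (by positivity)] at h3

lemma choose_mid_real (j : ℕ) (hj : 1 ≤ j) :
    (j.choose ((j+1)/2) : ℝ) * Real.sqrt j ≤ 2 ^ j := by
  rcases Nat.even_or_odd j with ⟨a, rfl⟩ | ⟨a, rfl⟩
  · have ha : 1 ≤ a := by omega
    have hmid : (a + a + 1) / 2 = a := by omega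
    have hch : (a+a).choose ((a+a+1)/2) = Nat.centralBinom a := by
      rw [hmid, Nat.centralBinom]; congr 1; ring
    rw [hch]
    have h1 : Real.sqrt (a+a : ℕ) ≤ Real.sqrt (2*a+1) := by
      apply Real.sqrt_le_sqrt; push_cast; linarith
    calc (Nat.centralBinom a : ℝ) * Real.sqrt (a+a : ℕ)
        ≤ (Nat.centralBinom a : ℝ) * Real.sqrt (2*a+1) := by
          apply mul_le_mul_of_nonneg_left h1 (by positivity)
      _ ≤ 4 ^ a := centralBinom_real a
      _ ≤ 2 ^ (a+a) := by rw [show (4:ℝ) = 2^2 by norm_num, ← pow_mul]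
                          apply pow_le_pow_right₀ one_le_two (by omega)
  · have hmid : (2*a + 1 + 1) / 2 = a + 1 := by omega
    rw [hmid]
    have hch : (2*a+1).choose (a+1) ≤ 2 * Nat.centralBinom a := by
      have : (2*a+1).choose (a+1) = (2*a).choose a + (2*a).choose (a+1) :=
        Nat.choose_succ_succ (2*a) a
      rw [this, Nat.centralBinom, Nat.two_mul ((2*a).choose a)]
      have h2 : (2*a).choose (a+1) ≤ (2*a).choose ((2*a)/2) := Nat.choose_le_middle _ _
      have h3 : (2*a)/2 = a := by omega
      rw [h3] at h2
      omega
    have h1 : Real.sqrt (2*a+1 : ℕ) ≤ Real.sqrt (2*a+1) := by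
      apply Real.sqrt_le_sqrt; push_cast; linarith
    calc ((2*a+1).choose (a+1) : ℝ) * Real.sqrt (2*a+1 : ℕ)
        ≤ (2 * Nat.centralBinom a : ℝ) * Real.sqrt (2*a+1) := by
          apply mul_le_mul (by exact_mod_cast hch) h1 (by positivity) (by positivity)
      _ = 2 * ((Nat.centralBinom a : ℝ) * Real.sqrt (2*a+1)) := by push_cast; ring
      _ ≤ 2 * 4 ^ a := by linarith [centralBinom_real a]
      _ ≤ 2 ^ (2*a+1) := by
          rw [show (4:ℝ) = 2^2 by norm_num, ← pow_mul, pow_succ]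
          ring_nf
          simp [mul_comm]

lemma mono_up (j i : ℕ) (h : i + 1 ≤ (j+1)/2) : j.choose i ≤ j.choose (i+1) := by
  rcases lt_or_ge i (j/2) with hlt | hge
  · exact Nat.choose_le_succ_of_lt_half_left hlt
  · have hj : j = 2*i+1 := by omega
    subst hj
    exact le_of_eq (Nat.choose_symm_half i).symm
lemma mono_down (j k : ℕ) (h : (j+1)/2 ≤ k) : j.choose (k+1) ≤ j.choose k := by
  rcases lt_or_ge k j with hk | hk
  · have h1 : j.choose (k+1) = j.choose (j - (k+1)) := (Nat.choose_symm (by omega)).symm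
    have h2 : j.choose k = j.choose (j - k) := (Nat.choose_symm (by omega)).symm
    have h3 : j - k = (j - (k+1)) + 1 := by omega
    rw [h1, h2, h3]
    exact mono_up j (j - (k+1)) (by omega)
  · rw [Nat.choose_eq_zero_of_lt (by omega)]
    exact Nat.zero_le _

lemma bigstep (P W : ℕ → ℝ) (hP : ∀ k, 0 ≤ P k) (hW : ∀ k, 0 ≤ W k) (N mm : ℕ)
    (hup : ∀ i, i + 1 ≤ mm → P i ≤ P (i+1))
    (hdown : ∀ k, mm ≤ k → P (k+1) ≤ P k)
    (hmN : mm + 1 ≤ N) :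
    ∑ k ∈ range N, |P k - (if k = 0 then 0 else P (k-1))| * W k
      ≤ P mm * (W mm + W (mm+1)) + 2 * ∑ k ∈ range N, P k * |W (k+1) - W k| := by
  set Sfull := ∑ k ∈ range N, P k * |W (k+1) - W k| with hSfull
  have hSterm : ∀ k, 0 ≤ P k * |W (k+1) - W k| := fun k =>
    mul_nonneg (hP k) (abs_nonneg _)
  have hsplit : ∑ k ∈ range N, |P k - (if k = 0 then 0 else P (k-1))| * W k
      = (∑ k ∈ range (mm+1), |P k - (if k = 0 then 0 else P (k-1))| * W k)
        + ∑ k ∈ Finset.Ico (mm+1) N, |P k - (if k = 0 then 0 else P (k-1))| * W k := by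
    rw [Finset.range_eq_Ico, ← Finset.sum_Ico_consecutive _ (Nat.zero_le (mm+1)) hmN,
      ← Finset.range_eq_Ico]
  have hD1 : (∑ k ∈ range (mm+1), |P k - (if k = 0 then 0 else P (k-1))| * W k)
      ≤ P mm * W mm + Sfull := by
    have habs : ∀ k ∈ range (mm+1), |P k - (if k = 0 then 0 else P (k-1))| * W k
        = (P k - (if k = 0 then 0 else P (k-1))) * W k := by
      intro k hk
      rcases Nat.eq_zero_or_pos k with rfl | hkpos
      · simp [abs_of_nonneg (hP 0)]
      · obtain ⟨i, rfl⟩ := Nat.exists_eq_succ_of_ne_zero hkpos.ne'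
        have hi : i + 1 ≤ mm := by
          have := Finset.mem_range.mp hk; omega
        rw [if_neg (Nat.succ_ne_zero i), Nat.succ_sub_one,
          abs_of_nonneg (sub_nonneg.mpr (hup i hi))]
    rw [Finset.sum_congr rfl habs,
      Finset.sum_range_succ' (fun k => (P k - (if k = 0 then 0 else P (k-1))) * W k) mm]
    simp only [if_neg (Nat.succ_ne_zero _), Nat.succ_sub_one, eq_self_iff_true, if_true, sub_zero]
    have hab := abel_up P W hP mm
    have hsub : ∑ k ∈ range mm, P k * |W (k+1) - W k| ≤ Sfull := by
      apply Finset.sum_le_sum_of_subset_of_nonneg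
        (Finset.range_subset_range.mpr (by omega))
      intro k _ _; exact hSterm k
    linarith
  have hD2 : (∑ k ∈ Finset.Ico (mm+1) N, |P k - (if k = 0 then 0 else P (k-1))| * W k)
      ≤ P mm * W (mm+1) + Sfull := by
    rw [Finset.sum_Ico_eq_sum_range]
    set t := N - (mm+1) with ht
    have habs : ∀ i ∈ range t, |P (mm+1+i) - (if mm+1+i = 0 then 0 else P (mm+1+i-1))| * W (mm+1+i)
        = (P (mm+i) - P (mm+(i+1))) * W (mm+1+i) := by
      intro i _
      rw [if_neg (by omega), show mm+1+i-1 = mm+i from by omega,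
        show mm+1+i = mm+(i+1) from by omega, abs_sub_comm,
        abs_of_nonneg (sub_nonneg.mpr (by
          rw [show mm + (i+1) = (mm+i) + 1 from by omega]
          exact hdown (mm+i) (by omega)))]
    rw [Finset.sum_congr rfl habs]
    have hab := abel_down (fun i => P (mm+i)) (fun i => W (mm+1+i)) (fun i => hP _) t
    simp only [Nat.add_zero] at hab
    have hend : 0 ≤ P (mm+t) * W (mm+1+t) := mul_nonneg (hP _) (hW _)
    have hsum2 : ∑ i ∈ range t, P (mm+(i+1)) * |W (mm+1+(i+1)) - W (mm+1+i)| ≤ Sfull := by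
      have e : ∀ i ∈ range t, P (mm+(i+1)) * |W (mm+1+(i+1)) - W (mm+1+i)|
          = P (mm+1+i) * |W ((mm+1+i) + 1) - W (mm+1+i)| := by
        intro i _
        rw [show mm+(i+1) = mm+1+i from by omega, show mm+1+(i+1) = (mm+1+i)+1 from by omega]
      rw [Finset.sum_congr rfl e, ← Finset.sum_Ico_eq_sum_range
        (fun k => P k * |W (k + 1) - W k|) (mm+1) N]
      apply Finset.sum_le_sum_of_subset_of_nonneg
      · rw [Finset.range_eq_Ico]
        exact Finset.Ico_subset_Ico (Nat.zero_le _) le_rfl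
      · intro k _ _; exact hSterm k
    have hcw : ∀ i, (P (mm+i) - P (mm+(i+1))) * W (mm+1+i)
        = (P (mm+i) - P (mm+(i+1))) * W (mm+1+i) := fun _ => rfl
    linarith
  calc ∑ k ∈ range N, |P k - (if k = 0 then 0 else P (k-1))| * W k
      = _ + _ := hsplit
    _ ≤ (P mm * W mm + Sfull) + (P mm * W (mm+1) + Sfull) := add_le_add hD1 hD2
    _ = P mm * (W mm + W (mm+1)) + 2 * Sfull := by ring

lemma choose_le_mid' (j k : ℕ) : j.choose k ≤ j.choose ((j+1)/2) := by
  rcases Nat.even_or_odd j with ⟨a, rfl⟩ | ⟨a, rfl⟩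
  · have : (a + a + 1) / 2 = (a + a) / 2 := by omega
    rw [this]; exact Nat.choose_le_middle k (a+a)
  · have h1 : (2*a + 1 + 1) / 2 = a + 1 := by omega
    have h2 : (2*a + 1) / 2 = a := by omega
    rw [h1, Nat.choose_symm_half]
    have := Nat.choose_le_middle k (2*a+1)
    rwa [h2] at this

lemma pm_bound (j : ℕ) (hj : 1 ≤ j) :
    (j.choose ((j+1)/2) : ℝ) ≤ 2 ^ j * (j:ℝ) ^ (-(1:ℝ)/2) := by
  have hj0 : (0:ℝ) < (j:ℝ) := by exact_mod_cast hj
  have hsq : (0:ℝ) < Real.sqrt j := Real.sqrt_pos.mpr hj0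
  have hr : (j:ℝ) ^ (-(1:ℝ)/2) = (Real.sqrt j)⁻¹ := by
    rw [show (-(1:ℝ)/2) = -(1/2) by ring, Real.rpow_neg hj0.le, Real.sqrt_eq_rpow]
  rw [hr, ← div_eq_mul_inv, le_div_iff₀ hsq]
  exact choose_mid_real j hj

lemma sum_PdW (θ : ℝ) (hθ0 : 0 ≤ θ) (hθ1 : θ ≤ 1) (j : ℕ) (hj : 1 ≤ j) (k₀ : ℤ) :
    ∑ k ∈ range (j+2), (j.choose k : ℝ) *
        (θ * (1 ⊔ (((k₀ - (k:ℕ)).natAbs : ℝ) - 1)) ^ (θ - 1))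
      ≤ 7 * 2^j * ((j:ℝ) ^ (θ/2) * (j:ℝ) ^ (-(1:ℝ)/2)) := by
  classical
  set T := Nat.sqrt j with hTdef
  have hT1 : 1 ≤ T := by
    have := Nat.sqrt_pos.mpr (by omega : 0 < j); omega
  have hj0 : (0:ℝ) < (j:ℝ) := by exact_mod_cast hj
  set H : ℕ → ℝ := fun t => (1 ⊔ ((t:ℝ) - 1)) ^ (θ - 1) with hHdef
  set d : ℕ → ℕ := fun k => (k₀ - (k:ℕ)).natAbs with hd
  have hHpos : ∀ t, (0:ℝ) < 1 ⊔ ((t:ℝ) - 1) := fun t =>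
    lt_of_lt_of_le zero_lt_one (le_max_left _ _)
  have hH0 : ∀ t, 0 ≤ H t := fun t => Real.rpow_nonneg (hHpos t).le _
  have hθH : ∀ t, 0 ≤ θ * H t := fun t => mul_nonneg hθ0 (hH0 t)
  have hterm0 : ∀ k, 0 ≤ (j.choose k : ℝ) * (θ * H (d k)) := fun k =>
    mul_nonneg (Nat.cast_nonneg _) (hθH _)
  have fT : (T:ℝ) ≤ Real.sqrt j := by
    have h1 : (T:ℝ)^2 ≤ (j:ℝ) := by
      exact_mod_cast Nat.sqrt_le' j
    nlinarith [Real.sq_sqrt hj0.le, Real.sqrt_nonneg (j:ℝ), Nat.cast_nonneg (α := ℝ) T]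
  have fT2 : Real.sqrt j ≤ 2 * T := by
    have h2 : j < (T+1)*(T+1) := Nat.lt_succ_sqrt j
    have h3 : j ≤ (2*T)*(2*T) := by nlinarith [hT1]
    have h1 : (j:ℝ) ≤ ((2*T:ℕ):ℝ)^2 := by
      rw [pow_two]
      exact_mod_cast h3
    calc Real.sqrt j ≤ Real.sqrt (((2*T:ℕ):ℝ)^2) := Real.sqrt_le_sqrt h1
      _ = ((2*T:ℕ):ℝ) := Real.sqrt_sq (by positivity)
      _ = 2 * T := by push_cast; ring
  have f3 : (T:ℝ)^θ ≤ (j:ℝ)^(θ/2) := by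
    calc (T:ℝ)^θ ≤ (Real.sqrt j)^θ :=
          Real.rpow_le_rpow (Nat.cast_nonneg T) fT hθ0
      _ = ((j:ℝ) ^ ((1:ℝ)/2))^θ := by rw [Real.sqrt_eq_rpow]
      _ = (j:ℝ)^(θ/2) := by
          rw [← Real.rpow_mul hj0.le]; ring_nf
  have f1j : (1:ℝ) ≤ (j:ℝ)^(θ/2) :=
    Real.one_le_rpow (by exact_mod_cast hj) (by linarith)
  have f4 : (T:ℝ)^(θ-1) ≤ 2 * ((j:ℝ) ^ (θ/2) * (j:ℝ) ^ (-(1:ℝ)/2)) := by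
    have hsq0 : (0:ℝ) < Real.sqrt j := Real.sqrt_pos.mpr hj0
    have hsqpos : (0:ℝ) < Real.sqrt j / 2 := by linarith
    have h1 : (T:ℝ)^(θ-1) ≤ (Real.sqrt j / 2)^(θ-1) := by
      apply Real.rpow_le_rpow_of_nonpos hsqpos (by linarith [fT2]) (by linarith)
    have h2 : (Real.sqrt j / 2)^(θ-1) = (Real.sqrt j)^(θ-1) / (2:ℝ)^(θ-1) :=
      Real.div_rpow (Real.sqrt_nonneg _) (by norm_num) _
    have h3 : ((2:ℝ))^(-(1:ℝ)) ≤ (2:ℝ)^(θ-1) :=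
      Real.rpow_le_rpow_of_exponent_le one_le_two (by linarith)
    have h4 : (Real.sqrt j)^(θ-1) = (j:ℝ) ^ (θ/2) * (j:ℝ) ^ (-(1:ℝ)/2) := by
      rw [Real.sqrt_eq_rpow, ← Real.rpow_mul hj0.le, ← Real.rpow_add hj0]
      ring_nf
    have h5 : (0:ℝ) < (2:ℝ)^(θ-1) := Real.rpow_pos_of_pos (by norm_num) _
    have h6 : (1:ℝ)/2 ≤ (2:ℝ)^(θ-1) := by
      rw [show ((2:ℝ))^(-(1:ℝ)) = 1/2 by rw [Real.rpow_neg_one]; norm_num] at h3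
      exact h3
    have h7 : (0:ℝ) ≤ (Real.sqrt j)^(θ-1) := Real.rpow_nonneg (Real.sqrt_nonneg _) _
    calc (T:ℝ)^(θ-1) ≤ (Real.sqrt j)^(θ-1) / (2:ℝ)^(θ-1) := by rw [← h2]; exact h1
      _ ≤ (Real.sqrt j)^(θ-1) / (1/2) :=
          div_le_div_of_nonneg_left h7 (by norm_num) h6
      _ = 2 * (Real.sqrt j)^(θ-1) := by ring
      _ = 2 * ((j:ℝ) ^ (θ/2) * (j:ℝ) ^ (-(1:ℝ)/2)) := by rw [h4]
  have hrw : ∑ k ∈ range (j+2), (j.choose k : ℝ) *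
        (θ * (1 ⊔ (((k₀ - (k:ℕ)).natAbs : ℝ) - 1)) ^ (θ - 1))
      = ∑ k ∈ range (j+2), (j.choose k : ℝ) * (θ * H (d k)) := rfl
  rw [hrw, ← Finset.sum_filter_add_sum_filter_not (range (j+2)) (fun k => d k ≤ T)
    (fun k => (j.choose k : ℝ) * (θ * H (d k)))]
  have hnear : ∑ k ∈ (range (j+2)).filter (fun k => d k ≤ T),
        (j.choose k : ℝ) * (θ * H (d k))
      ≤ 5 * 2^j * ((j:ℝ)^(θ/2) * (j:ℝ)^(-(1:ℝ)/2)) := by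
    have step1 : ∑ k ∈ (range (j+2)).filter (fun k => d k ≤ T),
          (j.choose k : ℝ) * (θ * H (d k))
        ≤ (j.choose ((j+1)/2) : ℝ)
          * ∑ k ∈ (range (j+2)).filter (fun k => d k ≤ T), (θ * H (d k)) := by
      rw [Finset.mul_sum]
      apply Finset.sum_le_sum
      intro k _
      exact mul_le_mul_of_nonneg_right (by exact_mod_cast choose_le_mid' j k) (hθH _)
    have hinner : ∑ k ∈ (range (j+2)).filter (fun k => d k ≤ T), (θ * H (d k))
        ≤ 3 + 2 * (T:ℝ)^θ := by
      have heq : ∀ k ∈ (range (j+2)).filter (fun k => d k ≤ T),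
          θ * H (d k) = θ * H ((((((k:ℤ) - k₀ + T).toNat : ℕ) : ℤ) - (T:ℕ)).natAbs) := by
        intro k hk
        have hk' : d k ≤ T := by simpa using (Finset.mem_filter.mp hk).2
        have hk'' : (k₀ - (k:ℕ)).natAbs ≤ T := hk'
        congr 2
        simp only [hd]
        omega
      rw [Finset.sum_congr rfl heq]
      have hinj : ∀ x ∈ (range (j+2)).filter (fun k => d k ≤ T),
          ∀ y ∈ (range (j+2)).filter (fun k => d k ≤ T),
          ((x:ℤ) - k₀ + T).toNat = ((y:ℤ) - k₀ + T).toNat → x = y := by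
        intro x hx y hy hxy
        have hx' : (k₀ - (x:ℕ)).natAbs ≤ T := by simpa using (Finset.mem_filter.mp hx).2
        have hy' : (k₀ - (y:ℕ)).natAbs ≤ T := by simpa using (Finset.mem_filter.mp hy).2
        omega
      rw [← Finset.sum_image (g := fun k : ℕ => ((k:ℤ) - k₀ + T).toNat)
        (f := fun i : ℕ => θ * H ((((i:ℕ):ℤ) - (T:ℕ)).natAbs)) hinj]
      have hsub : ((range (j+2)).filter (fun k => d k ≤ T)).image
            (fun k : ℕ => ((k:ℤ) - k₀ + T).toNat) ⊆ range (2*T+1) := by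
        intro i hi
        obtain ⟨k, hk, rfl⟩ := Finset.mem_image.mp hi
        have hk' : (k₀ - (k:ℕ)).natAbs ≤ T := by simpa using (Finset.mem_filter.mp hk).2
        rw [Finset.mem_range]
        omega
      refine le_trans (Finset.sum_le_sum_of_subset_of_nonneg hsub
        (fun i _ _ => hθH _)) ?_
      rw [sum_mirror (fun t => θ * H t) T]
      have hH0v : H 0 = 1 := by
        show (1 ⊔ (((0:ℕ):ℝ) - 1)) ^ (θ - 1) = 1
        rw [max_eq_left (by norm_num), Real.one_rpow]
      have htail : ∑ dd ∈ range T, θ * H (dd+1) ≤ 1 + (T:ℝ)^θ := by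
        have hmono : ∑ dd ∈ range T, θ * H (dd+1) ≤ ∑ dd ∈ range (T+1), θ * H (dd+1) :=
          Finset.sum_le_sum_of_subset_of_nonneg
            (Finset.range_subset_range.mpr (Nat.le_succ T)) (fun i _ _ => hθH _)
        refine le_trans hmono ?_
        rw [Finset.sum_range_succ' (fun dd => θ * H (dd+1)) T]
        have hH1 : H (0+1) = 1 := by
          show (1 ⊔ (((1:ℕ):ℝ) - 1)) ^ (θ - 1) = 1
          rw [max_eq_left (by norm_num), Real.one_rpow]
        have hterm : ∀ e ∈ range T, θ * H (e+1+1) = θ * ((e:ℝ)+1)^(θ-1) := by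
          intro e _
          congr 1
          show (1 ⊔ (((e+1+1:ℕ):ℝ) - 1)) ^ (θ - 1) = _
          rw [max_eq_right (by push_cast; linarith [Nat.cast_nonneg (α := ℝ) e])]
          congr 1
          push_cast; ring
        rw [Finset.sum_congr rfl hterm, hH1]
        have := sum_theta hθ0 hθ1 T
        linarith
      rw [hH0v]
      have : θ * 1 ≤ 1 := by linarith
      linarith
    have hPm : (j.choose ((j+1)/2) : ℝ) ≤ 2^j * (j:ℝ)^(-(1:ℝ)/2) := pm_bound j hj
    have hinner0 : 0 ≤ ∑ k ∈ (range (j+2)).filter (fun k => d k ≤ T), (θ * H (d k)) :=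
      Finset.sum_nonneg (fun k _ => hθH _)
    have h5T : 3 + 2 * (T:ℝ)^θ ≤ 5 * (j:ℝ)^(θ/2) := by nlinarith [f3, f1j]
    calc ∑ k ∈ (range (j+2)).filter (fun k => d k ≤ T), (j.choose k : ℝ) * (θ * H (d k))
        ≤ (j.choose ((j+1)/2) : ℝ)
          * ∑ k ∈ (range (j+2)).filter (fun k => d k ≤ T), (θ * H (d k)) := step1
      _ ≤ (2^j * (j:ℝ)^(-(1:ℝ)/2)) * (5 * (j:ℝ)^(θ/2)) := by
          apply mul_le_mul hPm (le_trans hinner h5T) hinner0 (by positivity)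
      _ = 5 * 2^j * ((j:ℝ)^(θ/2) * (j:ℝ)^(-(1:ℝ)/2)) := by ring
  have hfar : ∑ k ∈ (range (j+2)).filter (fun k => ¬ d k ≤ T),
        (j.choose k : ℝ) * (θ * H (d k))
      ≤ 2 * 2^j * ((j:ℝ)^(θ/2) * (j:ℝ)^(-(1:ℝ)/2)) := by
    have hTpos : (0:ℝ) < (T:ℝ) := by exact_mod_cast hT1
    have hstep : ∀ k ∈ (range (j+2)).filter (fun k => ¬ d k ≤ T),
        (j.choose k : ℝ) * (θ * H (d k)) ≤ (j.choose k : ℝ) * (T:ℝ)^(θ-1) := by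
      intro k hk
      have hk' : ¬ (d k ≤ T) := by simpa using (Finset.mem_filter.mp hk).2
      have hdk : T + 1 ≤ d k := by omega
      have hHb : H (d k) ≤ (T:ℝ)^(θ-1) := by
        apply Real.rpow_le_rpow_of_nonpos hTpos ?_ (by linarith)
        apply le_max_of_le_right
        have : ((T:ℕ):ℝ) + 1 ≤ ((d k : ℕ):ℝ) := by exact_mod_cast hdk
        linarith
      have h2 : θ * H (d k) ≤ (T:ℝ)^(θ-1) :=
        calc θ * H (d k) ≤ 1 * H (d k) := mul_le_mul_of_nonneg_right hθ1 (hH0 _)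
          _ = H (d k) := one_mul _
          _ ≤ _ := hHb
      exact mul_le_mul_of_nonneg_left h2 (Nat.cast_nonneg _)
    have hsumchoose : ∑ k ∈ range (j+2), (j.choose k : ℝ) = 2^j := by
      rw [Finset.sum_range_succ]
      have h1 : (j.choose (j+1) : ℝ) = 0 := by
        rw [Nat.choose_succ_self]; norm_num
      rw [h1, add_zero]
      exact_mod_cast Nat.sum_range_choose j
    calc ∑ k ∈ (range (j+2)).filter (fun k => ¬ d k ≤ T), (j.choose k : ℝ) * (θ * H (d k))
        ≤ ∑ k ∈ (range (j+2)).filter (fun k => ¬ d k ≤ T), (j.choose k : ℝ) * (T:ℝ)^(θ-1) :=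
          Finset.sum_le_sum hstep
      _ ≤ ∑ k ∈ range (j+2), (j.choose k : ℝ) * (T:ℝ)^(θ-1) :=
          Finset.sum_le_sum_of_subset_of_nonneg (Finset.filter_subset _ _)
            (fun k _ _ => mul_nonneg (Nat.cast_nonneg _) (Real.rpow_nonneg hTpos.le _))
      _ = 2^j * (T:ℝ)^(θ-1) := by rw [← Finset.sum_mul, hsumchoose]
      _ ≤ 2^j * (2 * ((j:ℝ)^(θ/2) * (j:ℝ)^(-(1:ℝ)/2))) := by
          apply mul_le_mul_of_nonneg_left f4 (by positivity)
      _ = 2 * 2^j * ((j:ℝ)^(θ/2) * (j:ℝ)^(-(1:ℝ)/2)) := by ring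
  linarith

lemma gap_eq (x ε : ℤ → ℝ) (hx : ∀ t : ℤ, x t = (t:ℝ) + ε t) (j : ℕ) (n : ℤ) :
    midIter x j (n+1) - midIter x j n - 1
      = (∑ k ∈ range (j+2),
          ((j.choose k : ℝ) - (if k = 0 then 0 else (j.choose (k-1) : ℝ)))
            * ε (n + 1 + (((j+1)/2 : ℕ) : ℤ) - k)) / 2^j := by
  have h2j : (0:ℝ) < 2^j := by positivity
  have hs : ∑ k ∈ range (j+1), (j.choose k:ℝ) = 2^j := by
    exact_mod_cast Nat.sum_range_choose j
  have hA : midIter x j (n+1)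
      = (∑ k ∈ range (j+1), (j.choose k:ℝ) *
          (((n + 1 + (((j+1)/2:ℕ):ℤ) - k : ℤ):ℝ) + ε (n + 1 + (((j+1)/2:ℕ):ℤ) - k))) / 2^j := by
    rw [midIter_eq_sum]
    congr 1
    refine Finset.sum_congr rfl fun k _ => ?_
    rw [hx]
  have hB : midIter x j n
      = (∑ k ∈ range (j+1), (j.choose k:ℝ) *
          (((n + 1 + (((j+1)/2:ℕ):ℤ) - ((k+1:ℕ):ℤ) : ℤ):ℝ)
            + ε (n + 1 + (((j+1)/2:ℕ):ℤ) - ((k+1:ℕ):ℤ)))) / 2^j := by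
    rw [midIter_eq_sum]
    congr 1
    refine Finset.sum_congr rfl fun k _ => ?_
    have e : (n + (((j+1)/2:ℕ):ℤ) - k) = (n + 1 + (((j+1)/2:ℕ):ℤ) - ((k+1:ℕ):ℤ)) := by
      push_cast; ring
    rw [← e, hx]
  have hshift : (∑ k ∈ range (j+1), (j.choose k:ℝ) * ε (n + 1 + (((j+1)/2:ℕ):ℤ) - k))
      - (∑ k ∈ range (j+1), (j.choose k:ℝ) * ε (n + 1 + (((j+1)/2:ℕ):ℤ) - ((k+1:ℕ):ℤ)))
      = ∑ k ∈ range (j+2),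
          ((j.choose k : ℝ) - (if k = 0 then 0 else (j.choose (k-1) : ℝ)))
            * ε (n + 1 + (((j+1)/2 : ℕ) : ℤ) - k) := by
    have h1 : ∑ k ∈ range (j+1), (j.choose k:ℝ) * ε (n + 1 + (((j+1)/2:ℕ):ℤ) - k)
        = ∑ k ∈ range (j+2), (j.choose k:ℝ) * ε (n + 1 + (((j+1)/2:ℕ):ℤ) - k) := by
      rw [Finset.sum_range_succ (fun k => (j.choose k:ℝ)
          * ε (n + 1 + (((j+1)/2:ℕ):ℤ) - (k:ℕ))) (j+1), Nat.choose_succ_self]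
      norm_num
    have h2 : ∑ k ∈ range (j+1), (j.choose k:ℝ) * ε (n + 1 + (((j+1)/2:ℕ):ℤ) - ((k+1:ℕ):ℤ))
        = ∑ k ∈ range (j+2), (if k = 0 then 0 else (j.choose (k-1):ℝ))
            * ε (n + 1 + (((j+1)/2:ℕ):ℤ) - k) := by
      rw [Finset.sum_range_succ' (fun k => (if k = 0 then 0 else (j.choose (k-1):ℝ))
        * ε (n + 1 + (((j+1)/2:ℕ):ℤ) - (k:ℕ))) (j+1)]
      simp only [if_neg (Nat.succ_ne_zero _), Nat.succ_sub_one, eq_self_iff_true, if_true,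
        zero_mul, add_zero, Nat.cast_zero, sub_zero]
    rw [h1, h2, ← Finset.sum_sub_distrib]
    exact Finset.sum_congr rfl fun k _ => by ring
  rw [hA, hB, div_sub_div_same, eq_div_iff (ne_of_gt h2j), sub_mul,
    div_mul_cancel₀ _ (ne_of_gt h2j), one_mul]
  have hexp : (∑ k ∈ range (j+1), (j.choose k:ℝ) *
          (((n + 1 + (((j+1)/2:ℕ):ℤ) - k : ℤ):ℝ) + ε (n + 1 + (((j+1)/2:ℕ):ℤ) - k)))
      - (∑ k ∈ range (j+1), (j.choose k:ℝ) *
          (((n + 1 + (((j+1)/2:ℕ):ℤ) - ((k+1:ℕ):ℤ) : ℤ):ℝ)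
            + ε (n + 1 + (((j+1)/2:ℕ):ℤ) - ((k+1:ℕ):ℤ))))
      = 2^j + ((∑ k ∈ range (j+1), (j.choose k:ℝ) * ε (n + 1 + (((j+1)/2:ℕ):ℤ) - k))
          - (∑ k ∈ range (j+1), (j.choose k:ℝ) * ε (n + 1 + (((j+1)/2:ℕ):ℤ) - ((k+1:ℕ):ℤ)))) := by
    rw [← Finset.sum_sub_distrib]
    have hterm : ∀ k ∈ range (j+1),
        (j.choose k:ℝ) * (((n + 1 + (((j+1)/2:ℕ):ℤ) - k : ℤ):ℝ)
            + ε (n + 1 + (((j+1)/2:ℕ):ℤ) - k))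
          - (j.choose k:ℝ) * (((n + 1 + (((j+1)/2:ℕ):ℤ) - ((k+1:ℕ):ℤ) : ℤ):ℝ)
            + ε (n + 1 + (((j+1)/2:ℕ):ℤ) - ((k+1:ℕ):ℤ)))
        = (j.choose k:ℝ)
          + ((j.choose k:ℝ) * ε (n + 1 + (((j+1)/2:ℕ):ℤ) - k)
            - (j.choose k:ℝ) * ε (n + 1 + (((j+1)/2:ℕ):ℤ) - ((k+1:ℕ):ℤ))) := by
      intro k _
      have hcast : ((n + 1 + (((j+1)/2:ℕ):ℤ) - k : ℤ):ℝ)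
          - ((n + 1 + (((j+1)/2:ℕ):ℤ) - ((k+1:ℕ):ℤ) : ℤ):ℝ) = 1 := by
        push_cast; ring
      linear_combination (j.choose k:ℝ) * hcast
    rw [Finset.sum_congr rfl hterm, Finset.sum_add_distrib, hs, Finset.sum_sub_distrib]
  rw [hexp, hshift]
  ring

/-- If `x_n = n + ε_n` with `|ε_n| ≤ C(1+|n|)^θ`, `0 ≤ θ < 1`, then the gaps
of the `j`-th midpoint sequence satisfy
`x^j_{n+1} - x^j_n = 1 + O((|n|^θ + j^{θ/2}) j^{-1/2})`, with implied constant
depending only on `C` and `θ`. -/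
theorem stmt9 (θ C : ℝ) (hθ0 : 0 ≤ θ) (hθ1 : θ < 1) (hC : 0 ≤ C) :
    ∃ K : ℝ, 0 < K ∧
      ∀ x ε : ℤ → ℝ,
        (∀ n : ℤ, x n = (n : ℝ) + ε n) →
        (∀ n : ℤ, |ε n| ≤ C * (1 + |(n : ℝ)|) ^ θ) →
        ∀ (n : ℤ) (j : ℕ), 1 ≤ j →
          |midIter x j (n + 1) - midIter x j n - 1|
            ≤ K * ((|(n : ℝ)| ^ θ + (j : ℝ) ^ (θ / 2)) * (j : ℝ) ^ (-(1:ℝ) / 2)) := by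
  refine ⟨20 * C + 1, by positivity, ?_⟩
  intro x ε hx hε n j hj
  have hθ1' : θ ≤ 1 := hθ1.le
  have hj0 : (0:ℝ) < (j:ℝ) := by exact_mod_cast hj
  have h2j : (0:ℝ) < 2^j := by positivity
  set B : ℝ := |(n : ℝ)| ^ θ + (j : ℝ) ^ (θ/2) with hBdef
  have hjth : (1:ℝ) ≤ (j:ℝ)^(θ/2) :=
    Real.one_le_rpow (by exact_mod_cast hj) (by linarith)
  have hB1 : (1:ℝ) ≤ B := by
    have : (0:ℝ) ≤ |(n : ℝ)| ^ θ := Real.rpow_nonneg (abs_nonneg _) θ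
    simp only [hBdef]; linarith
  have hBpos : (0:ℝ) < B := lt_of_lt_of_le zero_lt_one hB1
  have hjneg : (0:ℝ) < (j:ℝ)^(-(1:ℝ)/2) := Real.rpow_pos_of_pos hj0 _
  -- the weight bound near the center
  have hWcenter : ∀ v : ℤ, |v| ≤ |n| + 1 → (1 + |((v:ℤ):ℝ)|)^θ ≤ 3 * B := by
    intro v hv
    have hvr : |((v:ℤ):ℝ)| ≤ |(n:ℝ)| + 1 := by
      have h1 : |((v:ℤ):ℝ)| = ((|v| : ℤ) : ℝ) := by
        rw [Int.cast_abs]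
      have h2 : |(n:ℝ)| = ((|n| : ℤ) : ℝ) := by rw [Int.cast_abs]
      rw [h1, h2]
      exact_mod_cast by exact_mod_cast hv
    have hmax : (1:ℝ) + |((v:ℤ):ℝ)| ≤ 3 * (1 ⊔ |(n:ℝ)|) := by
      rcases le_total (|(n:ℝ)|) 1 with h | h
      · rw [max_eq_left h]; linarith
      · rw [max_eq_right h]; linarith
    have hmaxnn : (0:ℝ) ≤ 1 ⊔ |(n:ℝ)| := le_trans zero_le_one (le_max_left _ _)
    calc (1 + |((v:ℤ):ℝ)|)^θ ≤ (3 * (1 ⊔ |(n:ℝ)|))^θ :=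
          Real.rpow_le_rpow (by positivity) hmax hθ0
      _ = 3^θ * (1 ⊔ |(n:ℝ)|)^θ := Real.mul_rpow (by norm_num) hmaxnn
      _ ≤ 3 * B := by
          have h3 : (3:ℝ)^θ ≤ 3 := by
            calc (3:ℝ)^θ ≤ 3^(1:ℝ) :=
                  Real.rpow_le_rpow_of_exponent_le (by norm_num) hθ1'
              _ = 3 := Real.rpow_one 3
          have h4 : (1 ⊔ |(n:ℝ)|)^θ ≤ B := by
            rcases le_total (|(n:ℝ)|) 1 with h | h
            · rw [max_eq_left h, Real.one_rpow]; exact hB1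
            · rw [max_eq_right h]
              have : (0:ℝ) ≤ (j:ℝ)^(θ/2) := by positivity
              simp only [hBdef]; linarith
          have h5 : (0:ℝ) ≤ (3:ℝ)^θ := Real.rpow_nonneg (by norm_num) _
          have h6 : (0:ℝ) ≤ (1 ⊔ |(n:ℝ)|)^θ := Real.rpow_nonneg hmaxnn _
          nlinarith
  -- main computation
  rw [gap_eq x ε hx j n, abs_div, abs_of_pos h2j, div_le_iff₀ h2j]
  set W : ℕ → ℝ := fun k =>
    C * (1 + |((n + 1 + (((j+1)/2:ℕ):ℤ) - (k:ℕ) : ℤ):ℝ)|) ^ θ with hWdef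
  have hWnn : ∀ k, 0 ≤ W k := fun k =>
    mul_nonneg hC (Real.rpow_nonneg (by positivity) _)
  have hEabs : |∑ k ∈ range (j+2),
        ((j.choose k : ℝ) - (if k = 0 then 0 else (j.choose (k-1) : ℝ)))
          * ε (n + 1 + (((j+1)/2 : ℕ) : ℤ) - k)|
      ≤ ∑ k ∈ range (j+2),
          |(j.choose k : ℝ) - (if k = 0 then 0 else (j.choose (k-1) : ℝ))| * W k := by
    refine le_trans (Finset.abs_sum_le_sum_abs _ _) ?_
    apply Finset.sum_le_sum
    intro k _
    rw [abs_mul]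
    exact mul_le_mul_of_nonneg_left (hε _) (abs_nonneg _)
  have hbig := bigstep (fun k => (j.choose k : ℝ)) W
    (fun k => Nat.cast_nonneg _) hWnn (j+2) ((j+1)/2)
    (fun i hi => by
      show ((j.choose i : ℕ) : ℝ) ≤ ((j.choose (i+1) : ℕ) : ℝ)
      exact_mod_cast mono_up j i hi)
    (fun k hk => by
      show ((j.choose (k+1) : ℕ) : ℝ) ≤ ((j.choose k : ℕ) : ℝ)
      exact_mod_cast mono_down j k hk)
    (by omega)
  -- bound the centered terms
  have hFm : (n + 1 + (((j+1)/2:ℕ):ℤ) - (((j+1)/2 : ℕ):ℕ) : ℤ) = n + 1 := by push_cast; ring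
  have hFm1 : (n + 1 + (((j+1)/2:ℕ):ℤ) - ((((j+1)/2 : ℕ) + 1:ℕ)) : ℤ) = n := by push_cast; ring
  have hWm : W ((j+1)/2) + W ((j+1)/2 + 1) ≤ 6 * C * B := by
    have h1 : W ((j+1)/2) = C * (1 + |((n+1 : ℤ):ℝ)|)^θ := by
      simp only [hWdef, hFm]
    have h2 : W ((j+1)/2 + 1) = C * (1 + |((n : ℤ):ℝ)|)^θ := by
      simp only [hWdef, hFm1]
    rw [h1, h2]
    have b1 := hWcenter (n+1) (by simpa using abs_add_le n 1)
    have b2 := hWcenter n (by omega)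
    nlinarith [hC, b1, b2]
  have hPm : ((j.choose ((j+1)/2)) : ℝ) ≤ 2^j * (j:ℝ)^(-(1:ℝ)/2) := pm_bound j hj
  -- bound Sfull
  have hSfull : ∑ k ∈ range (j+2), (j.choose k : ℝ) * |W (k+1) - W k|
      ≤ C * (7 * 2^j * ((j:ℝ)^(θ/2) * (j:ℝ)^(-(1:ℝ)/2))) := by
    have hstep : ∀ k ∈ range (j+2), (j.choose k : ℝ) * |W (k+1) - W k|
        ≤ C * ((j.choose k : ℝ) *
            (θ * (1 ⊔ ((((n + 1 + (((j+1)/2:ℕ):ℤ)) - (k:ℕ)).natAbs : ℝ) - 1)) ^ (θ - 1))) := by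
      intro k _
      have hFk : (n + 1 + (((j+1)/2:ℕ):ℤ) - ((k+1:ℕ):ℤ) : ℤ)
          = (n + 1 + (((j+1)/2:ℕ):ℤ) - (k:ℕ)) - 1 := by push_cast; ring
      have habsW : |W (k+1) - W k|
          = C * |(1 + |(((n + 1 + (((j+1)/2:ℕ):ℤ) - (k:ℕ) : ℤ) - 1 : ℤ):ℝ)|)^θ
              - (1 + |((n + 1 + (((j+1)/2:ℕ):ℤ) - (k:ℕ) : ℤ):ℝ)|)^θ| := by
        simp only [hWdef, hFk]
        rw [← mul_sub, abs_mul, abs_of_nonneg hC]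
      have hwd := wdiff hθ0 hθ1' (n + 1 + (((j+1)/2:ℕ):ℤ) - (k:ℕ))
      rw [abs_sub_comm] at hwd
      have hnatabs : |((n + 1 + (((j+1)/2:ℕ):ℤ) - (k:ℕ) : ℤ):ℝ)|
          = (((n + 1 + (((j+1)/2:ℕ):ℤ) - (k:ℕ)).natAbs : ℝ)) := by
        rw [Nat.cast_natAbs]
        exact Int.cast_abs.symm
      have hd : |W (k+1) - W k|
          ≤ C * (θ * (1 ⊔ ((((n + 1 + (((j+1)/2:ℕ):ℤ)) - (k:ℕ)).natAbs : ℝ) - 1)) ^ (θ - 1)) := by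
        rw [habsW]
        apply mul_le_mul_of_nonneg_left _ hC
        rw [← hnatabs]
        exact le_trans hwd (le_of_eq rfl)
      calc (j.choose k : ℝ) * |W (k+1) - W k|
          ≤ (j.choose k : ℝ) * (C * (θ * (1 ⊔ ((((n + 1 + (((j+1)/2:ℕ):ℤ)) - (k:ℕ)).natAbs : ℝ) - 1)) ^ (θ - 1))) :=
            mul_le_mul_of_nonneg_left hd (Nat.cast_nonneg _)
        _ = C * ((j.choose k : ℝ) * (θ * (1 ⊔ ((((n + 1 + (((j+1)/2:ℕ):ℤ)) - (k:ℕ)).natAbs : ℝ) - 1)) ^ (θ - 1))) := by ring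
    refine le_trans (Finset.sum_le_sum hstep) ?_
    rw [← Finset.mul_sum]
    apply mul_le_mul_of_nonneg_left _ hC
    exact sum_PdW θ hθ0 hθ1' j hj (n + 1 + (((j+1)/2:ℕ):ℤ))
  -- combine
  have hcomb : ∑ k ∈ range (j+2),
        |(j.choose k : ℝ) - (if k = 0 then 0 else (j.choose (k-1) : ℝ))| * W k
      ≤ 20 * C * (B * (j:ℝ)^(-(1:ℝ)/2)) * 2^j := by
    have hjth2 : (j:ℝ)^(θ/2) ≤ B := by
      have : (0:ℝ) ≤ |(n : ℝ)| ^ θ := Real.rpow_nonneg (abs_nonneg _) θ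
      simp only [hBdef]; linarith
    have e1 : ((j.choose ((j+1)/2)) : ℝ) * (W ((j+1)/2) + W ((j+1)/2 + 1))
        ≤ (2^j * (j:ℝ)^(-(1:ℝ)/2)) * (6 * C * B) := by
      apply mul_le_mul hPm hWm (by positivity) (by positivity)
    have e2 : C * (7 * 2^j * ((j:ℝ)^(θ/2) * (j:ℝ)^(-(1:ℝ)/2)))
        ≤ C * (7 * 2^j * (B * (j:ℝ)^(-(1:ℝ)/2))) := by
      apply mul_le_mul_of_nonneg_left _ hC
      have : (j:ℝ)^(θ/2) * (j:ℝ)^(-(1:ℝ)/2) ≤ B * (j:ℝ)^(-(1:ℝ)/2) :=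
        mul_le_mul_of_nonneg_right hjth2 hjneg.le
      nlinarith [h2j]
    calc ∑ k ∈ range (j+2),
          |(j.choose k : ℝ) - (if k = 0 then 0 else (j.choose (k-1) : ℝ))| * W k
        ≤ ((j.choose ((j+1)/2)) : ℝ) * (W ((j+1)/2) + W ((j+1)/2 + 1))
          + 2 * ∑ k ∈ range (j+2), (j.choose k : ℝ) * |W (k+1) - W k| := hbig
      _ ≤ (2^j * (j:ℝ)^(-(1:ℝ)/2)) * (6 * C * B)
          + 2 * (C * (7 * 2^j * (B * (j:ℝ)^(-(1:ℝ)/2)))) := by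
          have := le_trans hSfull e2
          linarith
      _ = 20 * C * (B * (j:ℝ)^(-(1:ℝ)/2)) * 2^j := by ring
  calc |∑ k ∈ range (j+2),
        ((j.choose k : ℝ) - (if k = 0 then 0 else (j.choose (k-1) : ℝ)))
          * ε (n + 1 + (((j+1)/2 : ℕ) : ℤ) - k)|
      ≤ ∑ k ∈ range (j+2),
          |(j.choose k : ℝ) - (if k = 0 then 0 else (j.choose (k-1) : ℝ))| * W k := hEabs
    _ ≤ 20 * C * (B * (j:ℝ)^(-(1:ℝ)/2)) * 2^j := hcomb
    _ ≤ (20 * C + 1) * (B * (j:ℝ)^(-(1:ℝ)/2)) * 2^j := by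
        have hBj : (0:ℝ) ≤ B * (j:ℝ)^(-(1:ℝ)/2) := by positivity
        nlinarith [h2j, hBj]
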